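/- Let ℓ > r ≥ 2 be integers and let m be the unique maximizer of f(k) = (k−1)_{r−1}/k^{ℓ−1} over integers k ≥ r. Then m > ℓ(r−1)/(2(ℓ−r)) and m ≥ r. -/

import Mathlib

open Real Set

private lemma log_lb (x : ℝ) (h0 : 0 ≤ x) (h1 : x < 1) :
    2*x + 2*x^3/3 ≤ Real.log (1+x) - Real.log (1-x) := by
  set F : ℝ → ℝ := fun y => Real.log (1+y) - Real.log (1-y) - (2*y + 2*y^3/3) with hF
  have key : ∀ y ∈ Set.Ico (0:ℝ) 1, F 0 ≤ F y := by
    intro y hy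
    have mono : MonotoneOn F (Set.Icc 0 y) := by
      apply monotoneOn_of_hasDerivWithinAt_nonneg (f' := fun t =>
        1/(1+t) - (-1/(1-t)) - (2 + 2*t^2)) (convex_Icc 0 y)
      · apply ContinuousOn.sub
        apply ContinuousOn.sub
        · apply ContinuousOn.log (by fun_prop)
          intro z hz
          have : (0:ℝ) ≤ z := hz.1
          positivity
        · apply ContinuousOn.log (by fun_prop)
          intro z hz
          have h1z : z ≤ y := hz.2
          have : z < 1 := lt_of_le_of_lt h1z hy.2
          intro hc; nlinarith
        · fun_prop
      · intro t ht
        rw [interior_Icc] at ht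
        have ht0 : 0 < t := ht.1
        have ht1 : t < 1 := ht.2.trans hy.2
        have hd : HasDerivAt F (1/(1+t) - (-1/(1-t)) - (2 + 2*t^2)) t := by
          have h1d : HasDerivAt (fun z : ℝ => Real.log (1+z)) (1/(1+t)) t := by
            have : HasDerivAt (fun z : ℝ => 1+z) 1 t := (hasDerivAt_id t).const_add 1
            simpa using this.log (by positivity)
          have h2d : HasDerivAt (fun z : ℝ => Real.log (1-z)) (-1/(1-t)) t := by
            have : HasDerivAt (fun z : ℝ => 1-z) (-1) t := by
              exact (hasDerivAt_id' t).const_sub 1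
            simpa using this.log (by intro hc; nlinarith)
          have h3d : HasDerivAt (fun z : ℝ => 2*z + 2*z^3/3) (2 + 2*t^2) t := by
            have ha : HasDerivAt (fun z : ℝ => 2*z) 2 t := by
              simpa using (hasDerivAt_id t).const_mul 2
            have hb : HasDerivAt (fun z : ℝ => 2*z^3/3) (2*t^2) t := by
              have := (hasDerivAt_pow 3 t).const_mul (2:ℝ)
              have := this.div_const 3
              refine this.congr_deriv ?_
              push_cast; ring
            exact ha.add hb
          exact (h1d.sub h2d).sub h3d
        exact hd.hasDerivWithinAt
      · intro t ht
        rw [interior_Icc] at ht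
        have ht0 : 0 < t := ht.1
        have ht1 : t < 1 := ht.2.trans hy.2
        have hne : (1+t) > 0 := by linarith
        have hne' : (1-t) > 0 := by linarith
        have : 1/(1+t) - (-1/(1-t)) - (2 + 2*t^2) = 2*t^4/((1+t)*(1-t)) := by
          field_simp; ring
        rw [this]; positivity
    have h0y : (0:ℝ) ∈ Set.Icc (0:ℝ) y := ⟨le_refl 0, hy.1⟩
    have hyy : y ∈ Set.Icc (0:ℝ) y := ⟨hy.1, le_refl y⟩
    exact mono h0y hyy hy.1
  have := key x ⟨h0, h1⟩
  have hF0 : F 0 = 0 := by simp [hF]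
  rw [hF0] at this
  simp only [hF] at this
  linarith

private lemma log_ub (x : ℝ) (h0 : 0 ≤ x) (h1 : x < 1) :
    Real.log (1+x) - Real.log (1-x) ≤ 2*x + 2*x^3/(3*(1-x^2)) := by
  set F : ℝ → ℝ := fun y => 2*y + 2*y^3/(3*(1-y^2)) - (Real.log (1+y) - Real.log (1-y)) with hF
  have key : ∀ y ∈ Set.Ico (0:ℝ) 1, F 0 ≤ F y := by
    intro y hy
    have mono : MonotoneOn F (Set.Icc 0 y) := by
      apply monotoneOn_of_hasDerivWithinAt_nonneg (f' := fun t =>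
        (2 + (6*t^2*(3*(1-t^2)) - 2*t^3*(3*(-2*t)))/(3*(1-t^2))^2) -
          (1/(1+t) - (-1/(1-t)))) (convex_Icc 0 y)
      · apply ContinuousOn.sub
        · apply ContinuousOn.add (by fun_prop)
          apply ContinuousOn.div (by fun_prop) (by fun_prop)
          intro z hz
          have hz0 : (0:ℝ) ≤ z := hz.1
          have hz1 : z < 1 := lt_of_le_of_lt hz.2 hy.2
          intro hc; nlinarith
        · apply ContinuousOn.sub
          · apply ContinuousOn.log (by fun_prop)
            intro z hz
            have : (0:ℝ) ≤ z := hz.1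
            positivity
          · apply ContinuousOn.log (by fun_prop)
            intro z hz
            have hz1 : z < 1 := lt_of_le_of_lt hz.2 hy.2
            intro hc; nlinarith
      · intro t ht
        rw [interior_Icc] at ht
        have ht0 : 0 < t := ht.1
        have ht1 : t < 1 := ht.2.trans hy.2
        have hden : (3*(1-t^2)) ≠ 0 := by nlinarith
        have hd : HasDerivAt F ((2 + (6*t^2*(3*(1-t^2)) - 2*t^3*(3*(-2*t)))/(3*(1-t^2))^2) -
          (1/(1+t) - (-1/(1-t)))) t := by
          have ha : HasDerivAt (fun z : ℝ => 2*z) 2 t := by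
            simpa using (hasDerivAt_id t).const_mul 2
          have hnum : HasDerivAt (fun z : ℝ => 2*z^3) (6*t^2) t := by
            have := (hasDerivAt_pow 3 t).const_mul (2:ℝ)
            refine this.congr_deriv ?_; push_cast; ring
          have hden' : HasDerivAt (fun z : ℝ => 3*(1-z^2)) (3*(-2*t)) t := by
            have hneg : HasDerivAt (fun z : ℝ => 1 - z^2) (-(2*t)) t := by
              have := ((hasDerivAt_pow 2 t).neg).const_add (1:ℝ)
              refine this.congr_deriv ?_
              push_cast; ring
            have := hneg.const_mul (3:ℝ)
            refine this.congr_deriv ?_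
            ring
          have hb : HasDerivAt (fun z : ℝ => 2*z^3/(3*(1-z^2)))
              ((6*t^2*(3*(1-t^2)) - 2*t^3*(3*(-2*t)))/(3*(1-t^2))^2) t :=
            hnum.div hden' hden
          have h1d : HasDerivAt (fun z : ℝ => Real.log (1+z)) (1/(1+t)) t := by
            have : HasDerivAt (fun z : ℝ => 1+z) 1 t := (hasDerivAt_id t).const_add 1
            simpa using this.log (by positivity)
          have h2d : HasDerivAt (fun z : ℝ => Real.log (1-z)) (-1/(1-t)) t := by
            have : HasDerivAt (fun z : ℝ => 1-z) (-1) t := by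
              exact (hasDerivAt_id' t).const_sub 1
            simpa using this.log (by intro hc; nlinarith)
          exact (ha.add hb).sub (h1d.sub h2d)
        exact hd.hasDerivWithinAt
      · intro t ht
        rw [interior_Icc] at ht
        have ht0 : 0 < t := ht.1
        have ht1 : t < 1 := ht.2.trans hy.2
        have hne : (1+t) > 0 := by linarith
        have hne' : (1-t) > 0 := by linarith
        have hden : (3*(1-t^2)) ≠ 0 := by nlinarith
        have : (2 + (6*t^2*(3*(1-t^2)) - 2*t^3*(3*(-2*t)))/(3*(1-t^2))^2) -
            (1/(1+t) - (-1/(1-t))) = 4*t^4/(3*((1+t)*(1-t))^2) := by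
          have h2 : (1 - t^2) = (1+t)*(1-t) := by ring
          rw [h2]
          field_simp
          ring
        rw [this]; positivity
    have h0y : (0:ℝ) ∈ Set.Icc (0:ℝ) y := ⟨le_refl 0, hy.1⟩
    have hyy : y ∈ Set.Icc (0:ℝ) y := ⟨hy.1, le_refl y⟩
    exact mono h0y hyy hy.1
  have := key x ⟨h0, h1⟩
  have hF0 : F 0 = 0 := by simp [hF]
  rw [hF0] at this
  simp only [hF] at this
  linarith

set_option maxHeartbeats 1000000 in
/-- Lower bounds for the unique maximizer `m` of `f(k) = (k−1)_{r−1}/k^{ℓ−1}`: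
`m > ℓ(r−1)/(2(ℓ−r))` and `m ≥ r`. -/
theorem m_lower_bound (r ℓ m : ℕ) (hr : 2 ≤ r) (hℓ : r < ℓ)
    (f : ℕ → ℝ)
    (hf : ∀ k, f k = (∏ i ∈ Finset.range (r - 1), ((k : ℝ) - (i + 1))) / (k : ℝ) ^ (ℓ - 1))
    (hm : r ≤ m ∧ ∀ k, r ≤ k → k ≠ m → f k < f m) :
    (ℓ : ℝ) * ((r : ℝ) - 1) / (2 * ((ℓ : ℝ) - (r : ℝ))) < (m : ℝ) ∧ r ≤ m := by
  obtain ⟨hmr, hmax⟩ := hm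
  refine ⟨?_, hmr⟩
  set M : ℝ := (m : ℝ) with hM
  set R : ℝ := (r : ℝ) with hR
  set L : ℝ := (ℓ : ℝ) with hL
  have hR2 : (2:ℝ) ≤ R := by rw [hR]; exact_mod_cast hr
  have hMR : R ≤ M := by rw [hR, hM]; exact_mod_cast hmr
  have hLR : R + 1 ≤ L := by rw [hR, hL]; exact_mod_cast hℓ
  have hM2 : (2:ℝ) ≤ M := le_trans hR2 hMR
  have hMpos : (0:ℝ) < M := by linarith
  have hMRpos : (0:ℝ) < M - R + 1 := by linarith
  have hstep : f (m+1) < f m := hmax (m+1) (le_trans hmr (Nat.le_succ m)) (Nat.succ_ne_self m)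
  obtain ⟨n, hn⟩ : ∃ n, r - 1 = n + 1 := ⟨r - 2, by omega⟩
  have hnle : (n:ℝ) + 1 = R - 1 := by
    have h' : r = n + 2 := by omega
    rw [hR, h']; push_cast; ring
  set Q : ℝ := ∏ i ∈ Finset.range n, (M - ((i:ℝ) + 1)) with hQdef
  have hQpos : 0 < Q := by
    apply Finset.prod_pos
    intro i hi
    have h1 : (i:ℝ) + 1 ≤ (n:ℝ) := by
      exact_mod_cast Nat.succ_le_of_lt (Finset.mem_range.mp hi)
    have h2 : (i:ℝ) + 1 ≤ R - 2 := by linarith [hnle]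
    linarith
  have hp1 : (∏ i ∈ Finset.range (r-1), (M + 1 - ((i:ℝ) + 1))) = Q * M := by
    rw [hn, Finset.prod_range_succ']
    congr 1
    · apply Finset.prod_congr rfl
      intro i _
      push_cast; ring
    · push_cast; ring
  have hp2 : (∏ i ∈ Finset.range (r-1), (M - ((i:ℝ) + 1))) = Q * (M - R + 1) := by
    rw [hn, Finset.prod_range_succ, ← hQdef, hnle]
    ring
  have hfm1 : f (m+1) = Q * M / (M+1)^(ℓ-1) := by
    rw [hf]
    have hc : (((m+1:ℕ)):ℝ) = M + 1 := by push_cast; rw [hM]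
    rw [hc, hp1]
  have hfm : f m = Q * (M - R + 1) / M^(ℓ-1) := by
    rw [hf, ← hM, hp2]
  rw [hfm1, hfm] at hstep
  have hd1 : (0:ℝ) < (M+1)^(ℓ-1) := by positivity
  have hd2 : (0:ℝ) < M^(ℓ-1) := by positivity
  rw [div_lt_div_iff₀ hd1 hd2] at hstep
  have key : M * M^(ℓ-1) < (M - R + 1) * (M+1)^(ℓ-1) := by
    have h2' : Q * (M * M^(ℓ-1)) < Q * ((M - R + 1) * (M+1)^(ℓ-1)) := by
      linarith only [hstep]
    exact lt_of_mul_lt_mul_left h2' hQpos.le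
  have hE : (((ℓ-1 : ℕ)):ℝ) = L - 1 := by
    rw [hL, Nat.cast_sub (by omega : 1 ≤ ℓ)]; norm_num
  have hkey2 : Real.log (M * M^(ℓ-1)) < Real.log ((M - R + 1) * (M+1)^(ℓ-1)) :=
    Real.log_lt_log (by positivity) key
  rw [Real.log_mul (ne_of_gt hMpos) (ne_of_gt hd2),
      Real.log_mul (ne_of_gt hMRpos) (ne_of_gt hd1),
      Real.log_pow, Real.log_pow, hE] at hkey2
  set X : ℝ := Real.log M - Real.log (M - R + 1) with hXdef
  set Y : ℝ := Real.log (M+1) - Real.log M with hYdef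
  have hXY : X < (L-1) * Y := by
    rw [hXdef, hYdef]; linarith only [hkey2]
  set s : ℝ := (R-1)/(2*M-R+1) with hsdef
  set t : ℝ := 1/(2*M+1) with htdef
  have hApos : (0:ℝ) < 2*M - R + 1 := by linarith
  have hs0 : 0 ≤ s := div_nonneg (by linarith) hApos.le
  have hs1 : s < 1 := by rw [hsdef, div_lt_one hApos]; linarith
  have ht0 : 0 ≤ t := by rw [htdef]; positivity
  have ht1 : t < 1 := by rw [htdef, div_lt_one (by linarith)]; linarith
  have hXeq : Real.log (1+s) - Real.log (1-s) = X := by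
    have h1s : 1 + s = (2*M)/(2*M-R+1) := by rw [hsdef]; field_simp <;> ring
    have h2s : 1 - s = (2*(M-R+1))/(2*M-R+1) := by rw [hsdef]; field_simp <;> ring
    rw [h1s, h2s, Real.log_div (by positivity) (ne_of_gt hApos),
        Real.log_div (by positivity) (ne_of_gt hApos),
        Real.log_mul two_ne_zero (ne_of_gt hMpos),
        Real.log_mul two_ne_zero (ne_of_gt hMRpos), hXdef]
    ring
  have hYeq : Real.log (1+t) - Real.log (1-t) = Y := by
    have h1t : 1 + t = (2*(M+1))/(2*M+1) := by rw [htdef]; field_simp <;> ring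
    have h2t : 1 - t = (2*M)/(2*M+1) := by rw [htdef]; field_simp <;> ring
    rw [h1t, h2t, Real.log_div (by positivity) (by positivity),
        Real.log_div (by positivity) (by positivity),
        Real.log_mul two_ne_zero (by positivity),
        Real.log_mul two_ne_zero (ne_of_gt hMpos), hYdef]
    ring
  have hXge : 2*s + 2*s^3/3 ≤ X := hXeq ▸ log_lb s hs0 hs1
  have hYle : Y ≤ 2*t + 2*t^3/(3*(1-t^2)) := hYeq ▸ log_ub t ht0 ht1
  by_contra hcon
  push_neg at hcon
  have hpos2 : (0:ℝ) < 2*(L-R) := by linarith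
  have hcon' : M * (2*(L-R)) ≤ L*(R-1) := (le_div_iff₀ hpos2).mp hcon
  have h1 : (L-1)*(2*M-R+1) ≤ (R-1)*(2*M+1) := by linarith only [hcon']
  have keypoly : 0 ≤ 4*M*(M+1)*(2*M+1)*(R-1)*(3*(2*M-R+1)^2+(R-1)^2) -
      (L-1)*(12*M^2+12*M+1)*(2*M-R+1)^3 := by
    have hint1 : 0 ≤ ((R-1)*(2*M+1) - (L-1)*(2*M-R+1)) * ((12*M^2+12*M+1)*(2*M-R+1)^2) :=
      mul_nonneg (by linarith only [h1]) (by positivity)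
    have hA2 : (2*M-R+1)^2 ≤ 4*M*(M+1)*(R-1)^2 := by
      have e0 : 0 ≤ (R-1)*(4*M-R+1) :=
        mul_nonneg (by linarith only [hR2]) (by linarith only [hR2, hMR])
      have e1 : (2*M-R+1)^2 ≤ 4*M^2 := by nlinarith only [e0]
      have hsq : 1 ≤ (R-1)^2 := by
        nlinarith only [mul_nonneg (by linarith only [hR2] : (0:ℝ) ≤ R-2)
          (by linarith only [hR2] : (0:ℝ) ≤ R)]
      have e2' : 4*M*(M+1)*1 ≤ 4*M*(M+1)*((R-1)^2) :=
        mul_le_mul_of_nonneg_left hsq (by positivity)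
      have e2 : 4*M^2 ≤ 4*M*(M+1)*(R-1)^2 := by nlinarith only [e2', hMpos]
      linarith only [e1, e2]
    have hint3 : 0 ≤ (2*M+1)*(R-1)*(4*M*(M+1)*(R-1)^2 - (2*M-R+1)^2) :=
      mul_nonneg (mul_nonneg (by linarith only [hMpos]) (by linarith only [hR2]))
        (by linarith only [hA2])
    have hid : 4*M*(M+1)*(2*M+1)*(R-1)*(3*(2*M-R+1)^2+(R-1)^2) -
        (L-1)*(12*M^2+12*M+1)*(2*M-R+1)^3 =
        ((R-1)*(2*M+1) - (L-1)*(2*M-R+1)) * ((12*M^2+12*M+1)*(2*M-R+1)^2) +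
        (2*M+1)*(R-1)*(4*M*(M+1)*(R-1)^2 - (2*M-R+1)^2) := by ring
    rw [hid]
    exact add_nonneg hint1 hint3
  have hts : (1 - t^2) = (4*M^2+4*M)/((2*M+1)^2) := by
    rw [htdef]; field_simp <;> ring
  have hYu : 2*t + 2*t^3/(3*(1-t^2)) = (12*M^2+12*M+1)/(6*M*(M+1)*(2*M+1)) := by
    rw [hts, htdef]
    field_simp
    ring
  have hXl : 2*s + 2*s^3/3 = 2*(R-1)*(3*(2*M-R+1)^2+(R-1)^2)/(3*(2*M-R+1)^3) := by
    rw [hsdef]; field_simp <;> ring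
  have final : (L-1)*((12*M^2+12*M+1)/(6*M*(M+1)*(2*M+1))) ≤
      2*(R-1)*(3*(2*M-R+1)^2+(R-1)^2)/(3*(2*M-R+1)^3) := by
    refine sub_nonneg.mp ?_
    have hid2 : 2*(R-1)*(3*(2*M-R+1)^2+(R-1)^2)/(3*(2*M-R+1)^3) -
        (L-1)*((12*M^2+12*M+1)/(6*M*(M+1)*(2*M+1))) =
        (4*M*(M+1)*(2*M+1)*(R-1)*(3*(2*M-R+1)^2+(R-1)^2) -
          (L-1)*(12*M^2+12*M+1)*(2*M-R+1)^3) /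
          (6*M*(M+1)*(2*M+1)*(2*M-R+1)^3) := by
      field_simp <;> ring
    rw [hid2]
    exact div_nonneg keypoly (by positivity)
  have hLpos : (0:ℝ) ≤ L - 1 := by linarith
  have hchain : (L-1)*Y ≤ (L-1)*(2*t + 2*t^3/(3*(1-t^2))) :=
    mul_le_mul_of_nonneg_left hYle hLpos
  rw [hYu] at hchain
  rw [hXl] at hXge
  exact absurd ((hchain.trans final).trans hXge) (not_le.mpr hXY)
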